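/- Intermediate step in the two-tile lemma: if f, g ≥ 0 with ∫f = ∫g = 1, both f + Λ and g + Λ are packings at level 1, and ∑_{λ∈Λ} f(x−λ) = 1 for almost every x in −supp g, then ∑_{λ∈Λ} g(y−λ) = 1 for almost every y in −supp f. -/
import Mathlib


open MeasureTheory

theorem tiling_transfers_to_support
    {d : ℕ} (f g : EuclideanSpace ℝ (Fin d) → ℝ)
    (hfi : Integrable f) (hgi : Integrable g) (hf0 : 0 ≤ f) (hg0 : 0 ≤ g)
    (hfint : ∫ x, f x = 1) (hgint : ∫ x, g x = 1)
    (Λ : Set (EuclideanSpace ℝ (Fin d))) (hΛ : Λ.Countable)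
    (hfpack : ∀ᵐ x : EuclideanSpace ℝ (Fin d) ∂volume, ∑' p : Λ, f (x - p) ≤ 1)
    (hgpack : ∀ᵐ x : EuclideanSpace ℝ (Fin d) ∂volume, ∑' p : Λ, g (x - p) ≤ 1)
    (hftiles : ∀ᵐ x : EuclideanSpace ℝ (Fin d) ∂volume,
      x ∈ -Function.support g → ∑' p : Λ, f (x - p) = 1) :
    ∀ᵐ y : EuclideanSpace ℝ (Fin d) ∂volume,
      y ∈ -Function.support f → ∑' p : Λ, g (y - p) = 1 := by
  classical
  have hΛc : Countable Λ := hΛ.to_subtype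
  set F : EuclideanSpace ℝ (Fin d) → ENNReal := fun x => ENNReal.ofReal (f x) with hF
  set G : EuclideanSpace ℝ (Fin d) → ENNReal := fun x => ENNReal.ofReal (g x) with hG
  have hFm : AEMeasurable F volume := hfi.aemeasurable.ennreal_ofReal
  have hGm : AEMeasurable G volume := hgi.aemeasurable.ennreal_ofReal
  have hneg : MeasurePreserving (fun x : EuclideanSpace ℝ (Fin d) => -x) volume volume :=
    Measure.measurePreserving_neg _
  have hGnegm : AEMeasurable (fun x => G (-x)) volume :=
    hGm.comp_quasiMeasurePreserving hneg.quasiMeasurePreserving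
  have hFp : ∀ p : Λ, AEMeasurable (fun x => F (x - (p : EuclideanSpace ℝ (Fin d)))) volume :=
    fun p => hFm.comp_quasiMeasurePreserving
      (measurePreserving_sub_right volume (p : EuclideanSpace ℝ (Fin d))).quasiMeasurePreserving
  have hmp : ∀ p : EuclideanSpace ℝ (Fin d),
      MeasurePreserving (fun x : EuclideanSpace ℝ (Fin d) => -x - p) volume volume := by
    intro p
    have h1 := hneg.comp
      (measurePreserving_add_right (volume : Measure (EuclideanSpace ℝ (Fin d))) p)
    have h2 : ((fun x : EuclideanSpace ℝ (Fin d) => -x) ∘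
        fun x : EuclideanSpace ℝ (Fin d) => x + p) =
        fun x : EuclideanSpace ℝ (Fin d) => -x - p := by
      funext x; simp [Function.comp, neg_add, sub_eq_add_neg, add_comm]
    rwa [h2] at h1
  have hGnp : ∀ p : Λ, AEMeasurable (fun x => G (-x - (p : EuclideanSpace ℝ (Fin d)))) volume :=
    fun p => hGm.comp_quasiMeasurePreserving
      (hmp (p : EuclideanSpace ℝ (Fin d))).quasiMeasurePreserving
  -- the key Fubini-type identity
  have key : ∫⁻ x, G (-x) * ∑' p : Λ, F (x - (p : EuclideanSpace ℝ (Fin d))) =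
      ∫⁻ x, F x * ∑' p : Λ, G (-x - (p : EuclideanSpace ℝ (Fin d))) := by
    calc ∫⁻ x, G (-x) * ∑' p : Λ, F (x - (p : EuclideanSpace ℝ (Fin d)))
        = ∫⁻ x, ∑' p : Λ, G (-x) * F (x - (p : EuclideanSpace ℝ (Fin d))) := by
          simp_rw [ENNReal.tsum_mul_left]
      _ = ∑' p : Λ, ∫⁻ x, G (-x) * F (x - (p : EuclideanSpace ℝ (Fin d))) :=
          lintegral_tsum (fun p => hGnegm.mul (hFp p))
      _ = ∑' p : Λ, ∫⁻ x, G (-x - (p : EuclideanSpace ℝ (Fin d))) * F x := by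
          refine tsum_congr fun p => ?_
          rw [← lintegral_add_right_eq_self
            (fun x => G (-x) * F (x - (p : EuclideanSpace ℝ (Fin d))))
            (p : EuclideanSpace ℝ (Fin d))]
          refine lintegral_congr fun x => ?_
          simp [neg_add, sub_eq_add_neg, add_comm, add_assoc, add_left_comm]
      _ = ∫⁻ x, ∑' p : Λ, G (-x - (p : EuclideanSpace ℝ (Fin d))) * F x :=
          (lintegral_tsum (fun p => (hGnp p).mul hFm)).symm
      _ = ∫⁻ x, F x * ∑' p : Λ, G (-x - (p : EuclideanSpace ℝ (Fin d))) := by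
          refine lintegral_congr fun x => ?_
          rw [ENNReal.tsum_mul_right, mul_comm]
  have hF1 : ∫⁻ x, F x = 1 := by
    rw [hF, ← ofReal_integral_eq_lintegral_ofReal hfi (Filter.Eventually.of_forall hf0), hfint,
      ENNReal.ofReal_one]
  have hG1 : ∫⁻ x, G x = 1 := by
    rw [hG, ← ofReal_integral_eq_lintegral_ofReal hgi (Filter.Eventually.of_forall hg0), hgint,
      ENNReal.ofReal_one]
  have hGneg1 : ∫⁻ x, G (-x) = 1 := by
    rw [hneg.lintegral_comp_emb
      (MeasurableEquiv.neg (EuclideanSpace ℝ (Fin d))).measurableEmbedding G, hG1]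
  -- the left side equals 1
  have hLHS : ∫⁻ x, G (-x) * ∑' p : Λ, F (x - (p : EuclideanSpace ℝ (Fin d))) = 1 := by
    have hcong : ∀ᵐ x : EuclideanSpace ℝ (Fin d) ∂volume,
        G (-x) * ∑' p : Λ, F (x - (p : EuclideanSpace ℝ (Fin d))) = G (-x) := by
      filter_upwards [hftiles] with x hx
      rcases eq_or_ne (g (-x)) 0 with h0 | h0
      · simp [hG, h0]
      · have hmem : x ∈ -Function.support g := Set.mem_neg.mpr h0
        have hs := hx hmem
        have hsum : Summable (fun p : Λ => f (x - (p : EuclideanSpace ℝ (Fin d)))) := by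
          by_contra hns
          rw [tsum_eq_zero_of_not_summable hns] at hs
          norm_num at hs
        have h1 : ∑' p : Λ, F (x - (p : EuclideanSpace ℝ (Fin d))) = 1 := by
          rw [hF, ← ENNReal.ofReal_tsum_of_nonneg (fun p => hf0 _) hsum, hs, ENNReal.ofReal_one]
        rw [h1, mul_one]
    rw [lintegral_congr_ae hcong, hGneg1]
  have hRHS : ∫⁻ x, F x * ∑' p : Λ, G (-x - (p : EuclideanSpace ℝ (Fin d))) = 1 := by
    rw [← key, hLHS]
  have hmeas : AEMeasurable
      (fun x => F x * ∑' p : Λ, G (-x - (p : EuclideanSpace ℝ (Fin d)))) volume :=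
    hFm.mul (AEMeasurable.ennreal_tsum hGnp)
  have hfin : ∀ᵐ x : EuclideanSpace ℝ (Fin d) ∂volume,
      F x * ∑' p : Λ, G (-x - (p : EuclideanSpace ℝ (Fin d))) < ⊤ :=
    ae_lt_top' hmeas (by rw [hRHS]; exact ENNReal.one_ne_top)
  have hpackneg : ∀ᵐ x : EuclideanSpace ℝ (Fin d) ∂volume,
      ∑' p : Λ, g (-x - (p : EuclideanSpace ℝ (Fin d))) ≤ 1 :=
    hneg.quasiMeasurePreserving.ae hgpack
  -- a.e. bound
  have hle : (fun x => F x * ∑' p : Λ, G (-x - (p : EuclideanSpace ℝ (Fin d))))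
      ≤ᵐ[volume] F := by
    filter_upwards [hfin, hpackneg] with x hxfin hxpk
    rcases eq_or_ne (F x) 0 with h0 | h0
    · simp [h0]
    · have hΨfin : ∑' p : Λ, G (-x - (p : EuclideanSpace ℝ (Fin d))) ≠ ⊤ := by
        intro htop
        rw [htop, ENNReal.mul_top h0] at hxfin
        exact absurd hxfin (lt_irrefl _)
      have hsum : Summable (fun p : Λ => g (-x - (p : EuclideanSpace ℝ (Fin d)))) := by
        refine (ENNReal.summable_toReal hΨfin).congr fun p => ?_
        exact ENNReal.toReal_ofReal (hg0 _)
      have hΨ : ∑' p : Λ, G (-x - (p : EuclideanSpace ℝ (Fin d))) =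
          ENNReal.ofReal (∑' p : Λ, g (-x - (p : EuclideanSpace ℝ (Fin d)))) :=
        (ENNReal.ofReal_tsum_of_nonneg (fun p => hg0 _) hsum).symm
      have hΨle : ∑' p : Λ, G (-x - (p : EuclideanSpace ℝ (Fin d))) ≤ 1 := by
        rw [hΨ]; exact ENNReal.ofReal_le_one.mpr hxpk
      calc F x * ∑' p : Λ, G (-x - (p : EuclideanSpace ℝ (Fin d)))
          ≤ F x * 1 := mul_le_mul_right hΨle _
        _ = F x := mul_one _
  have heq : (fun x => F x * ∑' p : Λ, G (-x - (p : EuclideanSpace ℝ (Fin d))))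
      =ᵐ[volume] F :=
    ae_eq_of_ae_le_of_lintegral_le hle (by rw [hRHS]; exact ENNReal.one_ne_top) hFm
      (by rw [hRHS, hF1])
  -- deduce the pointwise statement on the support of f
  have hmain : ∀ᵐ x : EuclideanSpace ℝ (Fin d) ∂volume,
      f x ≠ 0 → ∑' p : Λ, g (-x - (p : EuclideanSpace ℝ (Fin d))) = 1 := by
    filter_upwards [heq] with x hx
    intro hfx
    have hFpos : F x ≠ 0 := by
      simp only [hF, ne_eq, ENNReal.ofReal_eq_zero, not_le]
      exact lt_of_le_of_ne (hf0 x) (Ne.symm hfx)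
    have hFtop : F x ≠ ⊤ := ENNReal.ofReal_ne_top
    have hΨ1 : ∑' p : Λ, G (-x - (p : EuclideanSpace ℝ (Fin d))) = 1 := by
      have h1 : F x * ∑' p : Λ, G (-x - (p : EuclideanSpace ℝ (Fin d))) = F x * 1 := by
        rw [mul_one]; exact hx
      exact (ENNReal.mul_right_inj hFpos hFtop).mp h1
    have hΨfin : ∑' p : Λ, G (-x - (p : EuclideanSpace ℝ (Fin d))) ≠ ⊤ := by
      rw [hΨ1]; exact ENNReal.one_ne_top
    have hsum : Summable (fun p : Λ => g (-x - (p : EuclideanSpace ℝ (Fin d)))) := by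
      refine (ENNReal.summable_toReal hΨfin).congr fun p => ?_
      exact ENNReal.toReal_ofReal (hg0 _)
    have h2 : ENNReal.ofReal (∑' p : Λ, g (-x - (p : EuclideanSpace ℝ (Fin d)))) = 1 := by
      rw [ENNReal.ofReal_tsum_of_nonneg (fun p => hg0 _) hsum]; exact hΨ1
    exact ENNReal.ofReal_eq_one.mp h2
  -- transfer through negation
  have hfinal := hneg.quasiMeasurePreserving.ae hmain
  filter_upwards [hfinal] with y hy hmem
  have hfy : f (-y) ≠ 0 := Function.mem_support.mp (Set.mem_neg.mp hmem)
  have h2 := hy hfy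
  simpa [neg_neg] using h2
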